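/- For a piecewise constant curve σ_x:[0,1]→X with σ_x(t)=x_i for t∈[i/2^N,(i+1)/2^N), i=0,...,2^N−1, one has sup_{h∈(0,1)} (1/h)∫_0^{1−h} d(σ_x(t+h),σ_x(t)) dt ≤ 2 Σ_{i=0}^{2^N−1} d(x_i, x_{i+1}). -/

import Mathlib

open MeasureTheory Filter Set ENNReal NNReal Topology

noncomputable section

/-- Luxemburg (Orlicz) norm of a nonnegative function. -/
def luxNorm (ψ : ℝ≥0∞ → ℝ≥0∞) {Ω : Type*} [MeasurableSpace Ω]
    (ν : Measure Ω) (u : Ω → ℝ≥0∞) : ℝ≥0∞ :=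
  sInf {l : ℝ≥0∞ | 0 < l ∧ ∫⁻ x, ψ (u x / l) ∂ν ≤ 1}

/-- Standard assumptions on the Orlicz function `ψ`: convex, lower semicontinuous,
non-decreasing, `ψ 0 = 0`, `ψ x → ∞` as `x → ∞`. -/
structure IsOrlicz (ψ : ℝ≥0∞ → ℝ≥0∞) : Prop where
  convex : ∀ a b x y : ℝ≥0∞, a + b = 1 → ψ (a * x + b * y) ≤ a * ψ x + b * ψ y
  lsc : LowerSemicontinuous ψ
  mono : Monotone ψ
  zero : ψ 0 = 0
  tendsto_top : ∀ C : ℝ≥0∞, ∃ M : ℝ≥0∞, ∀ x, M ≤ x → C ≤ ψ x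

/-- Superlinearity at infinity: `ψ x / x → ∞`. -/
def Superlinear (ψ : ℝ≥0∞ → ℝ≥0∞) : Prop :=
  ∀ C : ℝ≥0, ∃ M : ℝ≥0, ∀ x : ℝ≥0, M ≤ x → (C : ℝ≥0∞) * x ≤ ψ x

/-- Null right derivative at `0`: `ψ x / x → 0` as `x → 0⁺`. -/
def FlatAtZero (ψ : ℝ≥0∞ → ℝ≥0∞) : Prop :=
  ∀ ε : ℝ≥0, 0 < ε → ∃ δ : ℝ≥0, 0 < δ ∧ ∀ x : ℝ≥0, 0 < x → x ≤ δ → ψ x ≤ (ε : ℝ≥0∞) * x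

/-- Legendre conjugate `ψ*(y) = sup_{x ≥ 0} (x y - ψ x)`. -/
def conjOrlicz (ψ : ℝ≥0∞ → ℝ≥0∞) (y : ℝ≥0∞) : ℝ≥0∞ :=
  ⨆ x : ℝ≥0, (x : ℝ≥0∞) * y - ψ x

/-- Generalized inverse of `ψ` (with the convention of the paper). -/
def psiInv (ψ : ℝ≥0∞ → ℝ≥0∞) (s : ℝ≥0∞) : ℝ≥0∞ :=
  sSup {r : ℝ≥0∞ | ψ r ≤ s}

/-- `(X, τ, d)` is an extended Polish space: `d` is an extended distance, complete,
`d`-convergence implies `τ`-convergence, and `d` is `τ × τ` lower semicontinuous. -/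
structure IsExtPolish (X : Type*) [TopologicalSpace X] (d : X → X → ℝ≥0∞) : Prop where
  symm : ∀ x y, d x y = d y x
  eq_zero_iff : ∀ x y, d x y = 0 ↔ x = y
  triangle : ∀ x y z, d x z ≤ d x y + d y z
  complete : ∀ u : ℕ → X,
    (∀ ε : ℝ≥0∞, 0 < ε → ∃ N, ∀ m n, N ≤ m → N ≤ n → d (u m) (u n) < ε) →
    ∃ x, Tendsto (fun n => d (u n) x) atTop (𝓝 0)
  compat : ∀ (u : ℕ → X) (x : X),
    Tendsto (fun n => d (u n) x) atTop (𝓝 0) → Tendsto u atTop (𝓝 x)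
  lsc : LowerSemicontinuous fun p : X × X => d p.1 p.2

/-- Admissible transport plans between `μ` and `ν`. -/
def Couplings {X : Type*} [MeasurableSpace X] (μ ν : Measure X) : Set (Measure (X × X)) :=
  {γ | IsProbabilityMeasure γ ∧ γ.map Prod.fst = μ ∧ γ.map Prod.snd = ν}

/-- The Wasserstein–Orlicz extended distance. -/
def Wass (ψ : ℝ≥0∞ → ℝ≥0∞) {X : Type*} [MeasurableSpace X] (d : X → X → ℝ≥0∞)
    (μ ν : Measure X) : ℝ≥0∞ :=
  ⨅ γ ∈ Couplings μ ν, luxNorm ψ γ (fun p : X × X => d p.1 p.2)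

/-- Absolutely continuous curve with finite `L^ψ` energy with respect to the
extended distance `ρ`, on the interval `[a, b]`. -/
def IsACpsi (ψ : ℝ≥0∞ → ℝ≥0∞) {A : Type*} (ρ : A → A → ℝ≥0∞)
    (a b : ℝ) (u : ℝ → A) : Prop :=
  ∃ m : ℝ → ℝ≥0∞, luxNorm ψ (volume.restrict (Set.Icc a b)) m < ⊤ ∧
    ∀ s t : ℝ, a ≤ s → s ≤ t → t ≤ b → ρ (u s) (u t) ≤ ∫⁻ r in Set.Icc s t, m r

/-- The metric derivative of the curve `u` (with values in a space with extended
distance `ρ`) at time `t` within the interval `I` equals `L`. -/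
def HasMDeriv {A : Type*} (ρ : A → A → ℝ≥0∞) (u : ℝ → A) (I : Set ℝ) (t : ℝ)
    (L : ℝ≥0∞) : Prop :=
  Tendsto (fun h : ℝ => ρ (u (t + h)) (u t) / ENNReal.ofReal |h|)
    (𝓝[{h : ℝ | h ≠ 0 ∧ t + h ∈ I}] 0) (𝓝 L)

/-- The support of a Borel measure. -/
def measSupport {Y : Type*} [TopologicalSpace Y] [MeasurableSpace Y] (μ : Measure Y) : Set Y :=
  {y | ∀ U ∈ 𝓝 y, 0 < μ U}


private lemma chain_bound {X : Type*} (d : X → X → ℝ≥0∞)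
    (hrefl : ∀ x, d x x = 0) (htri : ∀ x y z, d x z ≤ d x y + d y z)
    (y : ℕ → X) : ∀ a b : ℕ, a ≤ b →
      d (y a) (y b) ≤ ∑ k ∈ Finset.Ico a b, d (y k) (y (k + 1)) := by
  intro a b hab
  induction b, hab using Nat.le_induction with
  | base => simp [hrefl]
  | succ b hab ih =>
      calc d (y a) (y (b+1)) ≤ d (y a) (y b) + d (y b) (y (b+1)) := htri _ _ _
        _ ≤ (∑ k ∈ Finset.Ico a b, d (y k) (y (k+1))) + d (y b) (y (b+1)) :=
            add_le_add_left ih _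
        _ = _ := (Finset.sum_Ico_succ_top hab _).symm

/-- estimate of the averaged difference quotients of a piecewise
constant curve by twice the total jump length. -/
theorem piecewise_constant_difference_quotient {X : Type*} (d : X → X → ℝ≥0∞)
    (hsymm : ∀ x y, d x y = d y x) (hrefl : ∀ x, d x x = 0)
    (htri : ∀ x y z, d x z ≤ d x y + d y z)
    (N : ℕ) (x : Fin (2 ^ N + 1) → X) (σ : ℝ → X)
    (hσ : ∀ i : Fin (2 ^ N), ∀ t ∈ Ico (((i : ℕ) : ℝ) / 2 ^ N) ((((i : ℕ) : ℝ) + 1) / 2 ^ N),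
      σ t = x i.castSucc)
    (h : ℝ) (hh : h ∈ Ioo (0 : ℝ) 1) :
    ∫⁻ t in Icc (0 : ℝ) (1 - h), d (σ (t + h)) (σ t) ≤
      ENNReal.ofReal (2 * h) * ∑ i : Fin (2 ^ N), d (x i.castSucc) (x i.succ) := by
  obtain ⟨hh0, hh1⟩ := hh
  have hMpos : (0:ℝ) < (2:ℝ) ^ N := by positivity
  -- the step function as a function of ℕ
  set y : ℕ → X := fun n => x ⟨min n (2^N), Nat.lt_succ_of_le (min_le_right _ _)⟩ with hy
  -- floor index
  set f : ℝ → ℕ := fun t => ⌊t * (2:ℝ)^N⌋₊ with hf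
  have hfloor : ∀ t : ℝ, 0 ≤ t → t < 1 → σ t = y (f t) ∧ f t < 2^N := by
    intro t ht0 ht1
    have h1 : ((f t : ℕ) : ℝ) ≤ t * (2:ℝ)^N := Nat.floor_le (by positivity)
    have h2 : t * (2:ℝ)^N < (f t : ℕ) + 1 := Nat.lt_floor_add_one _
    have hflt : f t < 2^N := by
      have : ((f t : ℕ) : ℝ) < ((2^N : ℕ) : ℝ) := by
        rw [show ((2^N : ℕ) : ℝ) = (2:ℝ)^N by push_cast; ring]
        calc ((f t : ℕ) : ℝ) ≤ t * (2:ℝ)^N := h1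
          _ < 1 * (2:ℝ)^N := by apply mul_lt_mul_of_pos_right ht1 hMpos
          _ = (2:ℝ)^N := one_mul _
      exact_mod_cast this
    refine ⟨?_, hflt⟩
    have hmem : t ∈ Ico ((((⟨f t, hflt⟩ : Fin (2^N)) : ℕ) : ℝ) / 2 ^ N)
        (((((⟨f t, hflt⟩ : Fin (2^N)) : ℕ) : ℝ) + 1) / 2 ^ N) := by
      constructor
      · rw [div_le_iff₀ hMpos]; exact h1
      · rw [lt_div_iff₀ hMpos]; exact h2
    rw [hσ ⟨f t, hflt⟩ t hmem]
    simp only [hy]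
    congr 1
    apply Fin.ext
    simp [Nat.min_eq_left hflt.le]
  -- the dominating function
  set S : ℕ → Set ℝ := fun k =>
    Ico (((k:ℝ)+1)/(2:ℝ)^N - h) (((k:ℝ)+1)/(2:ℝ)^N) with hS
  set g : ℝ → ℝ≥0∞ := fun t =>
    ∑ k ∈ Finset.range (2^N), (S k).indicator (fun _ => d (y k) (y (k+1))) t with hg
  have hpoint : ∀ t ∈ Ico (0:ℝ) (1 - h), d (σ (t + h)) (σ t) ≤ g t := by
    intro t ⟨ht0, ht1⟩
    have ht1' : t < 1 := by linarith
    have hth0 : 0 ≤ t + h := by linarith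
    have hth1 : t + h < 1 := by linarith
    obtain ⟨hσt, hit⟩ := hfloor t ht0 ht1'
    obtain ⟨hσth, hjt⟩ := hfloor (t + h) hth0 hth1
    rw [hσt, hσth, hsymm]
    have hij : f t ≤ f (t + h) :=
      Nat.floor_mono (mul_le_mul_of_nonneg_right (by linarith) hMpos.le)
    calc d (y (f t)) (y (f (t+h)))
        ≤ ∑ k ∈ Finset.Ico (f t) (f (t+h)), d (y k) (y (k+1)) :=
          chain_bound d hrefl htri y _ _ hij
      _ = ∑ k ∈ Finset.Ico (f t) (f (t+h)),
            (S k).indicator (fun _ => d (y k) (y (k+1))) t := by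
          apply Finset.sum_congr rfl
          intro k hk
          rw [Finset.mem_Ico] at hk
          have hmem : t ∈ S k := by
            have h1 : ((f t : ℕ) : ℝ) ≤ t * (2:ℝ)^N := Nat.floor_le (by positivity)
            have h2 : t * (2:ℝ)^N < (f t : ℕ) + 1 := Nat.lt_floor_add_one _
            have h3 : ((f (t+h) : ℕ) : ℝ) ≤ (t+h) * (2:ℝ)^N := Nat.floor_le (by positivity)
            have hk1 : ((f t : ℕ) : ℝ) ≤ (k : ℝ) := by exact_mod_cast hk.1
            have hk2 : ((k : ℕ) : ℝ) + 1 ≤ (f (t+h) : ℕ) := by exact_mod_cast hk.2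
            constructor
            · rw [sub_le_iff_le_add, div_le_iff₀ hMpos]
              calc (k:ℝ) + 1 ≤ ((f (t+h) : ℕ) : ℝ) := hk2
                _ ≤ (t+h) * (2:ℝ)^N := h3
                _ = (t + h) * (2:ℝ)^N := rfl
            · rw [lt_div_iff₀ hMpos]
              calc t * (2:ℝ)^N < ((f t : ℕ) : ℝ) + 1 := h2
                _ ≤ (k:ℝ) + 1 := by linarith
          rw [Set.indicator_of_mem hmem]
      _ ≤ g t := by
          apply Finset.sum_le_sum_of_subset
          intro k hk
          rw [Finset.mem_Ico] at hk
          rw [Finset.mem_range]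
          exact lt_of_lt_of_le hk.2 hjt.le
  have hIcoIcc : ∫⁻ t in Icc (0:ℝ) (1 - h), d (σ (t + h)) (σ t)
      = ∫⁻ t in Ico (0:ℝ) (1 - h), d (σ (t + h)) (σ t) :=
    (setLIntegral_congr Ico_ae_eq_Icc).symm
  rw [hIcoIcc]
  calc ∫⁻ t in Ico (0:ℝ) (1 - h), d (σ (t + h)) (σ t)
      ≤ ∫⁻ t in Ico (0:ℝ) (1 - h), g t :=
        setLIntegral_mono' measurableSet_Ico hpoint
    _ ≤ ∫⁻ t, g t := setLIntegral_le_lintegral _ _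
    _ = ∑ k ∈ Finset.range (2^N),
          ∫⁻ t, (S k).indicator (fun _ => d (y k) (y (k+1))) t := by
        rw [hg]
        exact lintegral_finset_sum _ fun k _ =>
          (measurable_const.indicator measurableSet_Ico)
    _ ≤ ∑ k ∈ Finset.range (2^N), ENNReal.ofReal (2 * h) * d (y k) (y (k+1)) := by
        apply Finset.sum_le_sum
        intro k _
        rw [lintegral_indicator measurableSet_Ico, setLIntegral_const,
          Real.volume_Ico]
        have : ((k:ℝ)+1)/(2:ℝ)^N - (((k:ℝ)+1)/(2:ℝ)^N - h) = h := by ring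
        rw [this, mul_comm]
        exact mul_le_mul_left (ENNReal.ofReal_le_ofReal (by linarith)) _
    _ = ENNReal.ofReal (2 * h) * ∑ k ∈ Finset.range (2^N), d (y k) (y (k+1)) :=
        (Finset.mul_sum _ _ _).symm
    _ = ENNReal.ofReal (2 * h) * ∑ i : Fin (2 ^ N), d (x i.castSucc) (x i.succ) := by
        congr 1
        rw [← Fin.sum_univ_eq_sum_range (fun k => d (y k) (y (k+1))) (2^N)]
        apply Finset.sum_congr rfl
        intro i _
        have hi1 : (i : ℕ) < 2^N := i.isLt
        have hi2 : (i : ℕ) + 1 ≤ 2^N := hi1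
        congr 1 <;> [skip; skip] <;> simp only [hy] <;> congr 1 <;> apply Fin.ext <;>
          simp [Nat.min_eq_left hi1.le, Nat.min_eq_left hi2]
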